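/- Suppose |a_0| = 1. Then N(F(p)) ≤ N(C) for every unit sparse companion matrix C of p in Hessenberg form, and N(F(p♯)) ≤ N(D) for every unit sparse companion matrix D of the monic reversal polynomial p♯ in Hessenberg form; that is, among all unit sparse companion matrices, the Frobenius companion matrix provides both the sharpest upper bound N(C(p)) and the sharpest lower bound 1/N(C(p♯)) on the modulus of a root of p. -/

import Mathlib

set_option maxHeartbeats 1000000
noncomputable section

/-- Maximum absolute row sum (the `∞`-norm). -/
def infNorm {n : ℕ} (A : Matrix (Fin n) (Fin n) ℂ) : ℝ :=
  ⨆ i, ∑ j, ‖A i j‖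

/-- Maximum absolute column sum (the `1`-norm). -/
def oneNorm {n : ℕ} (A : Matrix (Fin n) (Fin n) ℂ) : ℝ :=
  ⨆ j, ∑ i, ‖A i j‖

/-- `N(A) = min {‖A‖_∞, ‖A‖_1}`. -/
def NN {n : ℕ} (A : Matrix (Fin n) (Fin n) ℂ) : ℝ :=
  min (infNorm A) (oneNorm A)

/-- The monic polynomial `p(x) = x^n + a_{n-1}x^{n-1} + ⋯ + a_1 x + a_0`. -/
def pPoly (n : ℕ) (a : ℕ → ℂ) : Polynomial ℂ :=
  Polynomial.X ^ n + ∑ k ∈ Finset.range n, Polynomial.C (a k) * Polynomial.X ^ k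

/-- Coefficients of the monic reversal polynomial `p♯`:
`asharp n a k` is the coefficient of `x^k` in `p♯`, namely `1/a_0` for `k = 0`
and `a_{n-k}/a_0` for `1 ≤ k ≤ n-1`. -/
def asharp (n : ℕ) (a : ℕ → ℂ) : ℕ → ℂ :=
  fun k => if k = 0 then 1 / a 0 else a (n - k) / a 0

/-- A unit sparse companion matrix of `p` in Hessenberg form, with explicit data:
`m` (0-based; `m + 1 ≤ n`), and 0-based positions `(r k, c k)` (for `k = 0, …, n-1`)
satisfying `r k - c k = k`, `m ≤ r k ≤ n-1`, `0 ≤ c k ≤ m`; the superdiagonal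
entries are `1`, the entry at `(r k, c k)` is `-a_{n-1-k}`, and all other entries
are `0`.  (This is the 0-based translation of the 1-based description.) -/
def IsUnitSparseData (n m : ℕ) (a : ℕ → ℂ) (C : Matrix (Fin n) (Fin n) ℂ)
    (r c : Fin n → Fin n) : Prop :=
  m + 1 ≤ n ∧
  (∀ k : Fin n, (r k : ℕ) = (c k : ℕ) + (k : ℕ)) ∧
  (∀ k : Fin n, m ≤ (r k : ℕ)) ∧
  (∀ k : Fin n, (c k : ℕ) ≤ m) ∧
  (∀ k : Fin n, C (r k) (c k) = -a (n - 1 - (k : ℕ))) ∧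
  (∀ i j : Fin n, (j : ℕ) = (i : ℕ) + 1 → C i j = 1) ∧
  (∀ i j : Fin n, (j : ℕ) ≠ (i : ℕ) + 1 →
    (∀ k : Fin n, ¬(r k = i ∧ c k = j)) → C i j = 0)

/-- A unit sparse companion matrix of `p` in Hessenberg form. -/
def IsUnitSparse (n : ℕ) (a : ℕ → ℂ) (C : Matrix (Fin n) (Fin n) ℂ) : Prop :=
  ∃ (m : ℕ) (r c : Fin n → Fin n), IsUnitSparseData n m a C r c

/-- A Fiedler companion matrix of `p` in Hessenberg form (with explicit position
data): a unit sparse companion matrix such that for `1 ≤ k ≤ n-1`, if `-a_{k-1}`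
occupies position `(i,j)` then `-a_k` occupies position `(i-1,j)` or `(i,j+1)`.
Here the coefficient `-a_{n-1-k}` sits at position index `k`, so the coefficient
`-a_{k-1}` has index `k' = n-k` and `-a_k` has index `n-1-k = k' - 1`. -/
def IsFiedlerData (n m : ℕ) (a : ℕ → ℂ) (C : Matrix (Fin n) (Fin n) ℂ)
    (r c : Fin n → Fin n) : Prop :=
  IsUnitSparseData n m a C r c ∧
  ∀ k k' : Fin n, (k' : ℕ) = (k : ℕ) + 1 →
    ((r k : ℕ) + 1 = (r k' : ℕ) ∧ c k = c k') ∨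
    (r k = r k' ∧ (c k : ℕ) = (c k' : ℕ) + 1)

/-- The Frobenius companion matrix of the monic polynomial with coefficients `a`
(0-based: superdiagonal `1`'s and last row `-a_0, -a_1, …, -a_{n-1}`). -/
def Frob (n : ℕ) (a : ℕ → ℂ) : Matrix (Fin n) (Fin n) ℂ :=
  Matrix.of fun i j =>
    if (j : ℕ) = (i : ℕ) + 1 then 1
    else if (i : ℕ) = n - 1 then -a (j : ℕ)
    else 0

/-- The Fiedler companion matrix `L_b` (0-based translation): superdiagonal `1`'s,
`(L_b)_{i,b} = -a_{n+b-1-i}` for `b ≤ i ≤ n-2`, and `(L_b)_{n-1,j} = -a_j` for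
`0 ≤ j ≤ b`; all other entries `0`. -/
def Lmat (n b : ℕ) (a : ℕ → ℂ) : Matrix (Fin n) (Fin n) ℂ :=
  Matrix.of fun i j =>
    if (j : ℕ) = (i : ℕ) + 1 then 1
    else if (i : ℕ) = n - 1 ∧ (j : ℕ) ≤ b then -a (j : ℕ)
    else if (j : ℕ) = b ∧ b ≤ (i : ℕ) ∧ (i : ℕ) + 2 ≤ n then -a (n + b - 1 - (i : ℕ))
    else 0

/-- The matrix `W` (0-based translation): `W_{0,0} = -a_{n-1}`, `W_{0,n-1} = -a_0`,
`W_{i,i-1} = 1` for `1 ≤ i ≤ n-1`, `W_{i,0} = a_{i-1}/a_0` for `2 ≤ i ≤ n-1`;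
all other entries `0`. -/
def Wmat (n : ℕ) (a : ℕ → ℂ) : Matrix (Fin n) (Fin n) ℂ :=
  Matrix.of fun i j =>
    if (i : ℕ) = 0 ∧ (j : ℕ) = 0 then -a (n - 1)
    else if (i : ℕ) = 0 ∧ (j : ℕ) = n - 1 then -a 0
    else if (i : ℕ) = (j : ℕ) + 1 then 1
    else if 2 ≤ (i : ℕ) ∧ (j : ℕ) = 0 then a ((i : ℕ) - 1) / a 0
    else 0

/-- The matrix `X_b` (0-based translation): `(X_b)_{0,j} = -a_{n-1-j}` for
`0 ≤ j ≤ n-2-b`, `(X_b)_{0,n-1} = -a_0`, `(X_b)_{i,i-1} = 1` for `1 ≤ i ≤ n-2`,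
`(X_b)_{n-1,n-2} = 1`, `(X_b)_{n-1,j} = a_{n-2-j}/a_0` for `n-2-b ≤ j ≤ n-3`;
all other entries `0`. -/
def Xmat (n b : ℕ) (a : ℕ → ℂ) : Matrix (Fin n) (Fin n) ℂ :=
  Matrix.of fun i j =>
    if (i : ℕ) = 0 ∧ (j : ℕ) + b ≤ n - 2 then -a (n - 1 - (j : ℕ))
    else if (i : ℕ) = 0 ∧ (j : ℕ) = n - 1 then -a 0
    else if (i : ℕ) = (j : ℕ) + 1 ∧ (i : ℕ) + 2 ≤ n then 1
    else if (i : ℕ) = n - 1 ∧ (j : ℕ) = n - 2 then 1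
    else if (i : ℕ) = n - 1 ∧ n - 2 ≤ (j : ℕ) + b ∧ (j : ℕ) + 3 ≤ n then
      a (n - 2 - (j : ℕ)) / a 0
    else 0

/-- A matrix `E` of type `E_c(q)` for the monic polynomial with coefficients `b`
(0-based translation of the 1-based description): superdiagonal `1`'s,
`E_{n-1,0} = -b_0`, and positions `(r k, col k)` for `k = 0, …, n-2` with
`r k = col k + k`, `c ≤ r k`, `1 ≤ col k ≤ c`, holding `-b_{n-1-k}`; all other
entries `0`. -/
def IsTypeE (n c : ℕ) (b : ℕ → ℂ) (E : Matrix (Fin n) (Fin n) ℂ) : Prop :=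
  ∃ r col : ℕ → Fin n,
    (∀ k : ℕ, k ≤ n - 2 → (r k : ℕ) = (col k : ℕ) + k) ∧
    (∀ k : ℕ, k ≤ n - 2 → c ≤ (r k : ℕ)) ∧
    (∀ k : ℕ, k ≤ n - 2 → 1 ≤ (col k : ℕ) ∧ (col k : ℕ) ≤ c) ∧
    (∀ k : ℕ, k ≤ n - 2 → E (r k) (col k) = -b (n - 1 - k)) ∧
    (∀ i j : Fin n, (j : ℕ) = (i : ℕ) + 1 → E i j = 1) ∧
    (∀ i j : Fin n, (i : ℕ) = n - 1 → (j : ℕ) = 0 → E i j = -b 0) ∧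
    (∀ i j : Fin n, (j : ℕ) ≠ (i : ℕ) + 1 → ¬((i : ℕ) = n - 1 ∧ (j : ℕ) = 0) →
      (∀ k : ℕ, k ≤ n - 2 → ¬(r k = i ∧ col k = j)) → E i j = 0)

/-- `A` is of type `E_c(p♯)⁻¹`: `A = E⁻¹` for some `E` of type `E_c(p♯)`. -/
def IsTypeEInv (n c : ℕ) (a : ℕ → ℂ) (A : Matrix (Fin n) (Fin n) ℂ) : Prop :=
  ∃ E : Matrix (Fin n) (Fin n) ℂ, IsTypeE n c (asharp n a) E ∧ A = E⁻¹



lemma two_le_sum {n : ℕ} (f : Fin n → ℝ) (hf : ∀ i, 0 ≤ f i) {i1 i2 : Fin n}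
    (h : i1 ≠ i2) : f i1 + f i2 ≤ ∑ i, f i := by
  rw [← Finset.sum_pair h]
  exact Finset.sum_le_sum_of_subset_of_nonneg (Finset.subset_univ _)
    (fun i _ _ => hf i)

lemma one_le_sum {n : ℕ} (f : Fin n → ℝ) (hf : ∀ i, 0 ≤ f i) (i : Fin n) :
    f i ≤ ∑ j, f j :=
  Finset.single_le_sum (fun j _ => hf j) (Finset.mem_univ i)

lemma rowsum_le_infNorm {n : ℕ} (A : Matrix (Fin n) (Fin n) ℂ) (i : Fin n) :
    ∑ j, ‖A i j‖ ≤ infNorm A := by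
  unfold infNorm
  exact le_ciSup (f := fun i => ∑ j, ‖A i j‖)
    (Set.Finite.bddAbove (Set.finite_range _)) i

lemma colsum_le_oneNorm {n : ℕ} (A : Matrix (Fin n) (Fin n) ℂ) (j : Fin n) :
    ∑ i, ‖A i j‖ ≤ oneNorm A := by
  unfold oneNorm
  exact le_ciSup (f := fun j => ∑ i, ‖A i j‖)
    (Set.Finite.bddAbove (Set.finite_range _)) j

lemma frob_eq {n : ℕ} (a : ℕ → ℂ) (i j : Fin n) :
    Frob n a i j =
      if (j : ℕ) = (i : ℕ) + 1 then 1
      else if (i : ℕ) = n - 1 then -a (j : ℕ) else 0 := rfl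

lemma frob_sup {n : ℕ} (a : ℕ → ℂ) (i j : Fin n) (h : (j : ℕ) = (i : ℕ) + 1) :
    Frob n a i j = 1 := by
  rw [frob_eq, if_pos h]

lemma frob_last {n : ℕ} (a : ℕ → ℂ) (i j : Fin n) (h1 : (i : ℕ) = n - 1)
    (h2 : (j : ℕ) ≠ (i : ℕ) + 1) : Frob n a i j = -a (j : ℕ) := by
  rw [frob_eq, if_neg h2, if_pos h1]

lemma frob_zero {n : ℕ} (a : ℕ → ℂ) (i j : Fin n) (h1 : (i : ℕ) ≠ n - 1)
    (h2 : (j : ℕ) ≠ (i : ℕ) + 1) : Frob n a i j = 0 := by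
  rw [frob_eq, if_neg h2, if_neg h1]

lemma key (n : ℕ) (hn : 2 ≤ n) (a : ℕ → ℂ) (ha : ‖a 0‖ = 1)
    (C : Matrix (Fin n) (Fin n) ℂ) (hC : IsUnitSparse n a C) :
    NN (Frob n a) ≤ NN C := by
  obtain ⟨m, r, c, hmn, hrc, hmr, hcm, hval, hsup, hzero⟩ := hC
  haveI : Nonempty (Fin n) := ⟨⟨0, by omega⟩⟩
  obtain ⟨kL, hkLv⟩ : ∃ kL : Fin n, (kL : ℕ) = n - 1 := ⟨⟨n - 1, by omega⟩, rfl⟩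
  have hrL : (r kL : ℕ) = n - 1 := by
    have h1 := hrc kL
    have h2 := (r kL).isLt
    rw [hkLv] at h1
    omega
  have hcL : (c kL : ℕ) = 0 := by
    have h1 := hrc kL
    have h2 := (r kL).isLt
    rw [hkLv] at h1
    omega
  have hvL : C (r kL) (c kL) = -a 0 := by
    have := hval kL
    rw [hkLv] at this
    rwa [show n - 1 - (n - 1) = 0 by omega] at this
  obtain ⟨e0, he0v⟩ : ∃ e0 : Fin n, (e0 : ℕ) = 0 := ⟨⟨0, by omega⟩, rfl⟩
  obtain ⟨e1, he1v⟩ : ∃ e1 : Fin n, (e1 : ℕ) = 1 := ⟨⟨1, by omega⟩, rfl⟩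
  have hsup01 : C e0 e1 = 1 := hsup e0 e1 (by omega)
  have base_inf : (1 : ℝ) ≤ infNorm C := by
    calc (1 : ℝ) = ‖C e0 e1‖ := by rw [hsup01]; simp
      _ ≤ ∑ j, ‖C e0 j‖ :=
          one_le_sum (fun j => ‖C e0 j‖)
            (fun j => norm_nonneg _) e1
      _ ≤ infNorm C := rowsum_le_infNorm C e0
  have base_one : (1 : ℝ) ≤ oneNorm C := by
    calc (1 : ℝ) = ‖C e0 e1‖ := by rw [hsup01]; simp
      _ ≤ ∑ i, ‖C i e1‖ :=
          one_le_sum (fun i => ‖C i e1‖)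
            (fun i => norm_nonneg _) e0
      _ ≤ oneNorm C := colsum_le_oneNorm C e1
  have main : ∀ j : Fin n, (∑ i, ‖Frob n a i j‖) ≤ NN C := by
    intro j
    have hjlt := j.isLt
    by_cases hj : (j : ℕ) = 0
    · have h0 : ∀ i ∈ Finset.univ, i ≠ kL → ‖Frob n a i j‖ = 0 := by
        intro i _ hi
        have hiv : (i : ℕ) ≠ n - 1 := by
          intro h
          exact hi (Fin.ext (by rw [h, hkLv]))
        rw [frob_zero a i j hiv (by omega), norm_zero]
      have hs : (∑ i, ‖Frob n a i j‖) = 1 := by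
        rw [Finset.sum_eq_single_of_mem kL (Finset.mem_univ _) h0]
        rw [frob_last a kL j hkLv (by omega), hj]
        simpa using ha
      exact hs.trans_le (le_min base_inf base_one)
    · obtain ⟨j1, hj1v⟩ : ∃ j1 : Fin n, (j1 : ℕ) = (j : ℕ) - 1 :=
        ⟨⟨(j : ℕ) - 1, by omega⟩, rfl⟩
      have hne : j1 ≠ kL := by
        intro h
        have := congrArg Fin.val h
        rw [hj1v, hkLv] at this
        omega
      have h0 : ∀ i ∈ Finset.univ, i ≠ j1 ∧ i ≠ kL →
          ‖Frob n a i j‖ = 0 := by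
        intro i _ hi
        have hiv1 : (i : ℕ) ≠ (j : ℕ) - 1 := by
          intro h
          exact hi.1 (Fin.ext (by rw [h, hj1v]))
        have hiv2 : (i : ℕ) ≠ n - 1 := by
          intro h
          exact hi.2 (Fin.ext (by rw [h, hkLv]))
        rw [frob_zero a i j hiv2 (by omega), norm_zero]
      have hs : (∑ i, ‖Frob n a i j‖) = 1 + ‖a (j : ℕ)‖ := by
        rw [Finset.sum_eq_add_of_mem j1 kL (Finset.mem_univ _) (Finset.mem_univ _) hne h0]
        rw [frob_sup a j1 j (by rw [hj1v]; omega),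
          frob_last a kL j hkLv (by rw [hkLv]; omega)]
        simp
      refine hs.trans_le ?_
      obtain ⟨kk, hkkv⟩ : ∃ kk : Fin n, (kk : ℕ) = n - 1 - (j : ℕ) :=
        ⟨⟨n - 1 - (j : ℕ), by omega⟩, rfl⟩
      have hvk : C (r kk) (c kk) = -a (j : ℕ) := by
        have := hval kk
        rw [hkkv] at this
        rwa [show n - 1 - (n - 1 - (j : ℕ)) = (j : ℕ) by omega] at this
      have hrck := hrc kk
      rw [hkkv] at hrck
      have hrkl := (r kk).isLt
      have hckl := (c kk).isLt
      refine le_min ?_ ?_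
      · by_cases hre : (r kk : ℕ) = n - 1
        · have hrr : r kL = r kk := Fin.ext (by omega)
          have hcne : c kL ≠ c kk := by
            intro h
            have := congrArg Fin.val h
            omega
          calc 1 + ‖a (j : ℕ)‖
              = ‖C (r kk) (c kL)‖ + ‖C (r kk) (c kk)‖ := by
                rw [hvk, ← hrr, hvL]
                simp [ha]
            _ ≤ ∑ col, ‖C (r kk) col‖ :=
                two_le_sum (fun col => ‖C (r kk) col‖)
                  (fun i => norm_nonneg _) hcne
            _ ≤ infNorm C := rowsum_le_infNorm C (r kk)
        · obtain ⟨i2, hi2v⟩ : ∃ i2 : Fin n, (i2 : ℕ) = (r kk : ℕ) + 1 :=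
            ⟨⟨(r kk : ℕ) + 1, by omega⟩, rfl⟩
          have h1 : C (r kk) i2 = 1 := hsup _ _ hi2v
          have hcne : i2 ≠ c kk := by
            intro h
            have := congrArg Fin.val h
            rw [hi2v] at this
            omega
          calc 1 + ‖a (j : ℕ)‖
              = ‖C (r kk) i2‖ + ‖C (r kk) (c kk)‖ := by
                rw [h1, hvk]; simp
            _ ≤ ∑ col, ‖C (r kk) col‖ :=
                two_le_sum (fun col => ‖C (r kk) col‖)
                  (fun i => norm_nonneg _) hcne
            _ ≤ infNorm C := rowsum_le_infNorm C (r kk)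
      · by_cases hce : (c kk : ℕ) = 0
        · have hcc : c kL = c kk := Fin.ext (by omega)
          have hrne : r kL ≠ r kk := by
            intro h
            have := congrArg Fin.val h
            omega
          calc 1 + ‖a (j : ℕ)‖
              = ‖C (r kL) (c kk)‖ + ‖C (r kk) (c kk)‖ := by
                rw [hvk, ← hcc, hvL]
                simp [ha]
            _ ≤ ∑ row, ‖C row (c kk)‖ :=
                two_le_sum (fun row => ‖C row (c kk)‖)
                  (fun i => norm_nonneg _) hrne
            _ ≤ oneNorm C := colsum_le_oneNorm C (c kk)
        · obtain ⟨i2, hi2v⟩ : ∃ i2 : Fin n, (i2 : ℕ) = (c kk : ℕ) - 1 :=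
            ⟨⟨(c kk : ℕ) - 1, by omega⟩, rfl⟩
          have h1 : C i2 (c kk) = 1 := hsup _ _ (by rw [hi2v]; omega)
          have hrne : i2 ≠ r kk := by
            intro h
            have := congrArg Fin.val h
            rw [hi2v] at this
            omega
          calc 1 + ‖a (j : ℕ)‖
              = ‖C i2 (c kk)‖ + ‖C (r kk) (c kk)‖ := by
                rw [h1, hvk]; simp
            _ ≤ ∑ row, ‖C row (c kk)‖ :=
                two_le_sum (fun row => ‖C row (c kk)‖)
                  (fun i => norm_nonneg _) hrne
            _ ≤ oneNorm C := colsum_le_oneNorm C (c kk)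
  have h2 : oneNorm (Frob n a) ≤ NN C := by
    unfold oneNorm
    exact ciSup_le main
  exact le_trans (min_le_right _ _) h2

/-- if `|a_0| = 1` then `N(F(p)) ≤ N(C)` for every unit sparse
companion matrix `C` of `p`, and `N(F(p♯)) ≤ N(D)` for every unit sparse companion
matrix `D` of the monic reversal polynomial `p♯`. -/
theorem stmt10 (n : ℕ) (hn : 2 ≤ n) (a : ℕ → ℂ) (ha : ‖a 0‖ = 1) :
    (∀ C : Matrix (Fin n) (Fin n) ℂ, IsUnitSparse n a C →
      NN (Frob n a) ≤ NN C) ∧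
    (∀ D : Matrix (Fin n) (Fin n) ℂ, IsUnitSparse n (asharp n a) D →
      NN (Frob n (asharp n a)) ≤ NN D) := by
  constructor
  · intro C hC
    exact key n hn a ha C hC
  · intro D hD
    have ha' : ‖asharp n a 0‖ = 1 := by
      have h0 : asharp n a 0 = 1 / a 0 := rfl
      rw [h0, norm_div, norm_one, ha]
      norm_num
    exact key n hn (asharp n a) ha' D hD

end
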